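/- For every linear map M from d_A×d_A complex matrices to d_B×d_B complex matrices and every d_A×d_A complex matrix O, one has ‖M(O)‖₁ ≤ 2·‖O‖₁·(sup over density matrices ρ on the d_A-dimensional system of ‖M(ρ)‖₁). -/

import Mathlib

open Matrix ComplexOrder

/-- Trace norm of a square complex matrix. -/
noncomputable def traceNorm {n : Type*} [Fintype n] [DecidableEq n]
    (X : Matrix n n ℂ) : ℝ :=
  (((Matrix.posSemidef_conjTranspose_mul_self X).1.eigenvectorUnitary : Matrix n n ℂ) *
    diagonal (((↑) : ℝ → ℂ) ∘ Real.sqrt ∘ (Matrix.posSemidef_conjTranspose_mul_self X).1.eigenvalues) *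
    (star (Matrix.posSemidef_conjTranspose_mul_self X).1.eigenvectorUnitary : Matrix n n ℂ)).trace.re

/-- A density matrix: positive semidefinite with unit trace. -/
def IsDensityMatrix {n : Type*} [Fintype n] [DecidableEq n] (ρ : Matrix n n ℂ) : Prop :=
  ρ.PosSemidef ∧ ρ.trace = 1

/-- A quantum channel: a linear map admitting a Kraus representation. -/
def IsQuantumChannel {dA dB : ℕ}
    (N : Matrix (Fin dA) (Fin dA) ℂ →ₗ[ℂ] Matrix (Fin dB) (Fin dB) ℂ) : Prop :=
  ∃ (k : ℕ) (K : Fin k → Matrix (Fin dB) (Fin dA) ℂ),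
    (∀ X, N X = ∑ i, K i * X * (K i)ᴴ) ∧ (∑ i, (K i)ᴴ * K i = 1)

/-- Maximum causal effect. -/
noncomputable def CEmax {dA dB : ℕ}
    (N : Matrix (Fin dA) (Fin dA) ℂ →ₗ[ℂ] Matrix (Fin dB) (Fin dB) ℂ) : ℝ :=
  sSup {x : ℝ | ∃ ρ ρ' : Matrix (Fin dA) (Fin dA) ℂ,
    IsDensityMatrix ρ ∧ IsDensityMatrix ρ' ∧ ρ ≠ ρ' ∧
    x = traceNorm (N ρ - N ρ') / traceNorm (ρ - ρ')}

/-- Minimum causal effect. -/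
noncomputable def CEmin {dA dB : ℕ}
    (N : Matrix (Fin dA) (Fin dA) ℂ →ₗ[ℂ] Matrix (Fin dB) (Fin dB) ℂ) : ℝ :=
  sInf {x : ℝ | ∃ ρ ρ' : Matrix (Fin dA) (Fin dA) ℂ,
    IsDensityMatrix ρ ∧ IsDensityMatrix ρ' ∧ ρ ≠ ρ' ∧
    x = traceNorm (N ρ - N ρ') / traceNorm (ρ - ρ')}

/-- Minimum distinguishability preservation. -/
noncomputable def DPmin {dA dB : ℕ}
    (N : Matrix (Fin dA) (Fin dA) ℂ →ₗ[ℂ] Matrix (Fin dB) (Fin dB) ℂ) : ℝ :=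
  sInf {x : ℝ | ∃ p : ℝ, 0 ≤ p ∧ p ≤ 1 ∧
    ∃ ρ ρ' : Matrix (Fin dA) (Fin dA) ℂ,
      IsDensityMatrix ρ ∧ IsDensityMatrix ρ' ∧ ρ ≠ ρ' ∧
      x = traceNorm ((p : ℂ) • N ρ - ((1 - p : ℝ) : ℂ) • N ρ') /
          traceNorm ((p : ℂ) • ρ - ((1 - p : ℝ) : ℂ) • ρ')}


namespace TNAux
set_option linter.unusedSectionVars false

open Complex Finset

variable {n : Type*} [Fintype n] [DecidableEq n]

noncomputable def _root_.Matrix.PosSemidef.sqrt {A : Matrix n n ℂ} (hA : A.PosSemidef) :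
    Matrix n n ℂ :=
  (hA.1.eigenvectorUnitary : Matrix n n ℂ) *
    diagonal (((↑) : ℝ → ℂ) ∘ Real.sqrt ∘ hA.1.eigenvalues) *
    (star hA.1.eigenvectorUnitary : Matrix n n ℂ)

open scoped MatrixOrder in
lemma _root_.Matrix.PosSemidef.sqrt_eq_cfc {A : Matrix n n ℂ} (hA : A.PosSemidef) :
    hA.sqrt = CFC.sqrt A := by
  have h0 : 0 ≤ A := Matrix.nonneg_iff_posSemidef.mpr hA
  rw [CFC.sqrt_eq_real_sqrt A h0, cfcₙ_eq_cfc (hf0 := Real.sqrt_zero), hA.1.cfc_eq]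
  rfl

open scoped MatrixOrder in
lemma _root_.Matrix.PosSemidef.posSemidef_sqrt {A : Matrix n n ℂ} (hA : A.PosSemidef) :
    hA.sqrt.PosSemidef := by
  rw [hA.sqrt_eq_cfc]
  exact Matrix.nonneg_iff_posSemidef.mp (CFC.sqrt_nonneg A)

open scoped MatrixOrder in
lemma _root_.Matrix.PosSemidef.sqrt_mul_self {A : Matrix n n ℂ} (hA : A.PosSemidef) :
    hA.sqrt * hA.sqrt = A := by
  rw [hA.sqrt_eq_cfc]
  exact CFC.sqrt_mul_sqrt_self A (Matrix.nonneg_iff_posSemidef.mpr hA)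

lemma _root_.Matrix.PosSemidef.sq_sqrt {A : Matrix n n ℂ} (hA : A.PosSemidef) :
    hA.sqrt ^ 2 = A := by
  rw [pow_two, hA.sqrt_mul_self]

open scoped MatrixOrder in
lemma _root_.Matrix.PosSemidef.eq_sqrt_of_sq_eq {A B : Matrix n n ℂ} (hB : B.PosSemidef)
    (hA : A.PosSemidef) (h : B ^ 2 = A) : B = hA.sqrt := by
  rw [hA.sqrt_eq_cfc]
  exact ((CFC.sqrt_eq_iff A B (Matrix.nonneg_iff_posSemidef.mpr hA)
    (Matrix.nonneg_iff_posSemidef.mpr hB)).mpr (by rw [← h, pow_two])).symm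

lemma trace_eq_sum_eigenvalues {A : Matrix n n ℂ} (hA : A.IsHermitian) :
    A.trace = ((∑ i, hA.eigenvalues i : ℝ) : ℂ) := by
  conv_lhs => rw [hA.spectral_theorem, Unitary.conjStarAlgAut_apply]
  rw [Matrix.trace_mul_comm, ← Matrix.mul_assoc,
    Matrix.mem_unitaryGroup_iff'.mp hA.eigenvectorUnitary.2, Matrix.one_mul,
    Matrix.trace_diagonal]
  push_cast
  rfl

lemma posSemidef_ofReal_smul {c : ℝ} (hc : 0 ≤ c) {A : Matrix n n ℂ} (hA : A.PosSemidef) :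
    ((c : ℂ) • A).PosSemidef := by
  constructor
  · show ((c : ℂ) • A)ᴴ = (c : ℂ) • A
    rw [Matrix.conjTranspose_smul, hA.1]
    congr 1
    simp [Complex.star_def, Complex.conj_ofReal]
  · intro x
    exact (hA.smul (a := (c : ℂ)) (by rw [Complex.zero_le_real]; exact hc)).2 x

lemma traceNorm_psd {ρ : Matrix n n ℂ} (hρ : ρ.PosSemidef) :
    traceNorm ρ = ρ.trace.re := by
  show ((Matrix.posSemidef_conjTranspose_mul_self ρ).sqrt.trace).re = _
  rw [← hρ.eq_sqrt_of_sq_eq (Matrix.posSemidef_conjTranspose_mul_self ρ)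
    (by rw [pow_two, hρ.1])]

lemma psd_trace_re_nonneg {A : Matrix n n ℂ} (hA : A.PosSemidef) : 0 ≤ A.trace.re := by
  rw [trace_eq_sum_eigenvalues hA.1, Complex.ofReal_re]
  exact Finset.sum_nonneg fun i _ => hA.eigenvalues_nonneg i

lemma traceNorm_nonneg (X : Matrix n n ℂ) : 0 ≤ traceNorm X := by
  have h := (Matrix.posSemidef_conjTranspose_mul_self X).posSemidef_sqrt
  rw [show traceNorm X = ((Matrix.posSemidef_conjTranspose_mul_self X).sqrt.trace).re from rfl]
  exact psd_trace_re_nonneg h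

lemma traceNorm_zero : traceNorm (0 : Matrix n n ℂ) = 0 := by
  rw [traceNorm_psd Matrix.PosSemidef.zero]; simp

lemma traceNorm_smul (c : ℂ) (X : Matrix n n ℂ) :
    traceNorm (c • X) = ‖c‖ * traceNorm X := by
  have h := Matrix.posSemidef_conjTranspose_mul_self X
  have hP := h.posSemidef_sqrt
  have hA : (((‖c‖ : ℝ) : ℂ) • h.sqrt).PosSemidef :=
    posSemidef_ofReal_smul (norm_nonneg c) hP
  have hsq : (((‖c‖ : ℝ) : ℂ) • h.sqrt) ^ 2 = (c • X)ᴴ * (c • X) := by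
    rw [smul_pow, h.sq_sqrt, Matrix.conjTranspose_smul, Matrix.smul_mul, Matrix.mul_smul,
      smul_smul]
    congr 1
    rw [Complex.star_def, mul_comm ((starRingEnd ℂ) c) c, Complex.mul_conj]
    rw [Complex.normSq_eq_norm_sq]
    push_cast
    rfl
  rw [show traceNorm (c • X) =
      ((Matrix.posSemidef_conjTranspose_mul_self (c • X)).sqrt.trace).re from rfl]
  rw [← hA.eq_sqrt_of_sq_eq (Matrix.posSemidef_conjTranspose_mul_self (c • X)) hsq,
    Matrix.trace_smul, smul_eq_mul, Complex.mul_re, Complex.ofReal_re, Complex.ofReal_im,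
    show traceNorm X = h.sqrt.trace.re from rfl]
  ring

lemma psd_eq_zero_of_trace_re {A : Matrix n n ℂ} (hA : A.PosSemidef) (h : A.trace.re = 0) :
    A = 0 := by
  have ht := trace_eq_sum_eigenvalues hA.1
  have hsum : ∑ i, hA.1.eigenvalues i = 0 := by
    rw [ht, Complex.ofReal_re] at h; exact h
  have hzero : ∀ i ∈ Finset.univ, hA.1.eigenvalues i = 0 :=
    (Finset.sum_eq_zero_iff_of_nonneg (fun i _ => hA.eigenvalues_nonneg i)).mp hsum
  have hdiag : Matrix.diagonal (RCLike.ofReal ∘ hA.1.eigenvalues) = (0 : Matrix n n ℂ) := by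
    rw [show RCLike.ofReal ∘ hA.1.eigenvalues = fun _ => (0 : ℂ) from ?_, Matrix.diagonal_zero]
    funext i
    simp [hzero i (Finset.mem_univ i)]
  conv_lhs => rw [hA.1.spectral_theorem, hdiag]
  simp


lemma exists_polar (X : Matrix n n ℂ) :
    ∃ U : Matrix n n ℂ, Uᴴ * U = 1 ∧ U * Uᴴ = 1 ∧
      X = U * (Matrix.posSemidef_conjTranspose_mul_self X).sqrt := by
  classical
  have h := Matrix.posSemidef_conjTranspose_mul_self X
  set P := h.sqrt with hPdef
  have hP : P.PosSemidef := h.posSemidef_sqrt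
  have hPP : P * P = Xᴴ * X := h.sqrt_mul_self
  set Q : Matrix n n ℂ := (hP.1.eigenvectorUnitary : Matrix n n ℂ) with hQdef
  have hQ1 : Qᴴ * Q = 1 := by
    rw [hQdef, ← Matrix.star_eq_conjTranspose]
    exact Matrix.mem_unitaryGroup_iff'.mp hP.1.eigenvectorUnitary.2
  have hQ2 : Q * Qᴴ = 1 := by
    rw [hQdef, ← Matrix.star_eq_conjTranspose]
    exact Matrix.mem_unitaryGroup_iff.mp hP.1.eigenvectorUnitary.2
  have cancel1 : ∀ A : Matrix n n ℂ, Qᴴ * (Q * A) = A := fun A => by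
    rw [← Matrix.mul_assoc, hQ1, Matrix.one_mul]
  have cancel2 : ∀ A : Matrix n n ℂ, Q * (Qᴴ * A) = A := fun A => by
    rw [← Matrix.mul_assoc, hQ2, Matrix.one_mul]
  set d : n → ℝ := hP.1.eigenvalues with hddef
  have hd : ∀ i, 0 ≤ d i := hP.eigenvalues_nonneg
  set D : Matrix n n ℂ := Matrix.diagonal (fun i => (d i : ℂ)) with hDdef
  have hspec : P = Q * D * Qᴴ := by
    have := hP.1.spectral_theorem
    rw [Unitary.conjStarAlgAut_apply] at this
    rw [← Matrix.star_eq_conjTranspose]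
    exact this
  set Y : Matrix n n ℂ := X * Q with hYdef
  have hYY : Yᴴ * Y = Matrix.diagonal (fun i => (d i : ℂ) * (d i : ℂ)) := by
    have e1 : Yᴴ * Y = Qᴴ * ((Xᴴ * X) * Q) := by
      rw [hYdef, Matrix.conjTranspose_mul]
      simp only [Matrix.mul_assoc]
    rw [← hPP, hspec] at e1
    simp only [Matrix.mul_assoc, cancel1, cancel2, hQ1, hQ2, Matrix.mul_one] at e1
    rw [e1, hDdef, Matrix.diagonal_mul_diagonal]
  have hYent : ∀ i j, (∑ k, (starRingEnd ℂ) (Y k i) * Y k j)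
      = if i = j then (d i : ℂ) * (d i : ℂ) else 0 := by
    intro i j
    have := congrFun (congrFun hYY i) j
    simpa [Matrix.mul_apply, Matrix.conjTranspose_apply, Matrix.diagonal_apply,
      Complex.star_def] using this
  set v : n → EuclideanSpace ℂ n := fun i => WithLp.toLp 2 (fun k => ((d i : ℂ))⁻¹ * Y k i) with hvdef
  have hinner : ∀ i j, (inner ℂ (v i) (v j) : ℂ)
      = ((d i : ℂ))⁻¹ * (((d j : ℂ))⁻¹ * ∑ k, (starRingEnd ℂ) (Y k i) * Y k j) := by
    intro i j
    rw [PiLp.inner_apply, Finset.mul_sum, Finset.mul_sum]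
    refine Finset.sum_congr rfl fun k _ => ?_
    simp only [hvdef, PiLp.toLp_apply, RCLike.inner_apply, _root_.map_mul, map_inv₀, Complex.conj_ofReal]
    ring
  have horth : Orthonormal ℂ (Set.domRestrict {i | d i ≠ 0} v) := by
    rw [orthonormal_iff_ite]
    rintro ⟨i, hi⟩ ⟨j, hj⟩
    by_cases hij : i = j
    · subst hij
      rw [if_pos rfl, Set.domRestrict_apply, hinner, hYent, if_pos rfl]
      have hdi : (d i : ℂ) ≠ 0 := Complex.ofReal_ne_zero.mpr hi
      field_simp
    · rw [if_neg (by simp [Subtype.mk_eq_mk, hij]), Set.domRestrict_apply, Set.domRestrict_apply,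
        hinner, hYent, if_neg hij]
      simp
  obtain ⟨b, hb⟩ := horth.exists_orthonormalBasis_extension_of_card_eq
    (by simp [finrank_euclideanSpace])
  set B : Matrix n n ℂ := Matrix.of (fun k i => b i k) with hBdef
  have hB : Bᴴ * B = 1 := by
    ext i j
    have hbij := (orthonormal_iff_ite.mp b.orthonormal) i j
    rw [PiLp.inner_apply] at hbij
    simp only [RCLike.inner_apply] at hbij
    rw [Matrix.mul_apply, Matrix.one_apply]
    simpa [hBdef, Matrix.conjTranspose_apply, Complex.star_def, mul_comm] using hbij
  have hB' : B * Bᴴ = 1 := mul_eq_one_comm.mp hB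
  have hXQ : Y = B * D := by
    ext k i
    rw [hDdef, Matrix.mul_diagonal]
    by_cases hdi : d i = 0
    · have h0 : (∑ k, (starRingEnd ℂ) (Y k i) * Y k i) = 0 := by
        rw [hYent i i, if_pos rfl, hdi]; simp
      have h0' : ∑ k, Complex.normSq (Y k i) = 0 := by
        have : ((∑ k, Complex.normSq (Y k i) : ℝ) : ℂ) = 0 := by
          rw [← h0]
          push_cast
          refine Finset.sum_congr rfl fun k _ => ?_
          rw [mul_comm, Complex.mul_conj]
        exact_mod_cast this
      have hzero : Y k i = 0 := by
        have := (Finset.sum_eq_zero_iff_of_nonneg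
          (fun k _ => Complex.normSq_nonneg (Y k i))).mp h0' k (Finset.mem_univ k)
        exact Complex.normSq_eq_zero.mp this
      rw [hzero, hdi]
      simp
    · have hbi : b i = v i := hb i hdi
      have : B k i = ((d i : ℂ))⁻¹ * Y k i := by
        rw [hBdef]
        show b i k = _
        rw [hbi]
      rw [this]
      have hdi' : (d i : ℂ) ≠ 0 := Complex.ofReal_ne_zero.mpr hdi
      field_simp
  refine ⟨B * Qᴴ, ?_, ?_, ?_⟩
  · rw [Matrix.conjTranspose_mul, Matrix.conjTranspose_conjTranspose]
    calc Q * Bᴴ * (B * Qᴴ) = Q * (Bᴴ * B * Qᴴ) := by simp only [Matrix.mul_assoc]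
    _ = 1 := by rw [hB, Matrix.one_mul, hQ2]
  · rw [Matrix.conjTranspose_mul, Matrix.conjTranspose_conjTranspose]
    calc B * Qᴴ * (Q * Bᴴ) = B * (Qᴴ * (Q * Bᴴ)) := by simp only [Matrix.mul_assoc]
    _ = 1 := by rw [cancel1, hB']
  · rw [hspec]
    calc X = X * (Q * Qᴴ) := by rw [hQ2, Matrix.mul_one]
    _ = (X * Q) * Qᴴ := by rw [Matrix.mul_assoc]
    _ = B * D * Qᴴ := by rw [← hYdef, hXQ]
    _ = B * Qᴴ * (Q * D * Qᴴ) := by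
        simp only [Matrix.mul_assoc, cancel1]


lemma re_trace_mul_psd_le {V P : Matrix n n ℂ} (hV : V * Vᴴ = 1) (hP : P.PosSemidef) :
    ((V * P).trace).re ≤ (P.trace).re := by
  classical
  set Q : Matrix n n ℂ := (hP.1.eigenvectorUnitary : Matrix n n ℂ) with hQdef
  have hQ1 : Qᴴ * Q = 1 := by
    rw [hQdef, ← Matrix.star_eq_conjTranspose]
    exact Matrix.mem_unitaryGroup_iff'.mp hP.1.eigenvectorUnitary.2
  have hQ2 : Q * Qᴴ = 1 := by
    rw [hQdef, ← Matrix.star_eq_conjTranspose]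
    exact Matrix.mem_unitaryGroup_iff.mp hP.1.eigenvectorUnitary.2
  set d : n → ℝ := hP.1.eigenvalues with hddef
  have hd : ∀ i, 0 ≤ d i := hP.eigenvalues_nonneg
  set D : Matrix n n ℂ := Matrix.diagonal (fun i => (d i : ℂ)) with hDdef
  have hspec : P = Q * D * Qᴴ := by
    have := hP.1.spectral_theorem
    rw [Unitary.conjStarAlgAut_apply] at this
    rw [← Matrix.star_eq_conjTranspose]
    exact this
  set W : Matrix n n ℂ := Qᴴ * (V * Q) with hWdef
  have cancel2 : ∀ A : Matrix n n ℂ, Q * (Qᴴ * A) = A := fun A => by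
    rw [← Matrix.mul_assoc, hQ2, Matrix.one_mul]
  have hW : W * Wᴴ = 1 := by
    rw [hWdef]
    simp only [Matrix.conjTranspose_mul, Matrix.conjTranspose_conjTranspose]
    calc Qᴴ * (V * Q) * (Qᴴ * Vᴴ * Q) = Qᴴ * (V * (Q * (Qᴴ * (Vᴴ * Q)))) := by
          simp only [Matrix.mul_assoc]
    _ = Qᴴ * (V * (Vᴴ * Q)) := by rw [cancel2]
    _ = Qᴴ * ((V * Vᴴ) * Q) := by rw [Matrix.mul_assoc]
    _ = 1 := by rw [hV, Matrix.one_mul, hQ1]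
  have htr : (V * P).trace = (W * D).trace := by
    rw [hspec]
    calc (V * (Q * D * Qᴴ)).trace = ((V * Q * D) * Qᴴ).trace := by
          simp only [Matrix.mul_assoc]
    _ = (Qᴴ * (V * Q * D)).trace := Matrix.trace_mul_comm _ _
    _ = (W * D).trace := by rw [hWdef]; simp only [Matrix.mul_assoc]
  have hWii : ∀ i, (W i i).re ≤ 1 := by
    intro i
    have h1 : ∑ j, Complex.normSq (W i j) = 1 := by
      have := congrFun (congrFun hW i) i
      rw [Matrix.mul_apply, Matrix.one_apply_eq] at this
      have : ((∑ j, Complex.normSq (W i j) : ℝ) : ℂ) = 1 := by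
        rw [← this]
        push_cast
        refine Finset.sum_congr rfl fun j _ => ?_
        rw [Matrix.conjTranspose_apply, ← Complex.mul_conj]
        rfl
      exact_mod_cast this
    have h2 : Complex.normSq (W i i) ≤ 1 := by
      rw [← h1]
      exact Finset.single_le_sum (fun j _ => Complex.normSq_nonneg _) (Finset.mem_univ i)
    have h3 := Complex.normSq_apply (W i i)
    nlinarith [sq_nonneg ((W i i).re - 1), sq_nonneg (W i i).im]
  have hre : ((W * D).trace).re = ∑ i, (W i i).re * d i := by
    rw [Matrix.trace, Complex.re_sum]
    refine Finset.sum_congr rfl fun i _ => ?_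
    rw [Matrix.diag_apply, hDdef, Matrix.mul_diagonal, Complex.mul_re]
    simp
  have hPre : (P.trace).re = ∑ i, d i := by
    rw [trace_eq_sum_eigenvalues hP.1, Complex.ofReal_re]
  rw [htr, hre, hPre]
  refine Finset.sum_le_sum fun i _ => ?_
  calc (W i i).re * d i ≤ 1 * d i := mul_le_mul_of_nonneg_right (hWii i) (hd i)
  _ = d i := one_mul _

lemma re_trace_mul_le (X : Matrix n n ℂ) {U : Matrix n n ℂ} (hU : U * Uᴴ = 1) :
    ((U * X).trace).re ≤ traceNorm X := by
  obtain ⟨W, hW1, hW2, hXW⟩ := exists_polar X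
  have key : (U * X).trace = ((U * W) * (Matrix.posSemidef_conjTranspose_mul_self X).sqrt).trace := by
    conv_lhs => rw [hXW]
    rw [Matrix.mul_assoc]
  rw [key]
  have hUW : (U * W) * (U * W)ᴴ = 1 := by
    rw [Matrix.conjTranspose_mul]
    calc U * W * (Wᴴ * Uᴴ) = U * (W * Wᴴ) * Uᴴ := by simp only [Matrix.mul_assoc]
    _ = 1 := by rw [hW2, Matrix.mul_one, hU]
  exact re_trace_mul_psd_le hUW (Matrix.posSemidef_conjTranspose_mul_self X).posSemidef_sqrt

lemma traceNorm_add_le (X Y : Matrix n n ℂ) :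
    traceNorm (X + Y) ≤ traceNorm X + traceNorm Y := by
  obtain ⟨U, hU1, hU2, hXY⟩ := exists_polar (X + Y)
  have key : traceNorm (X + Y) = ((Uᴴ * (X + Y)).trace).re := by
    conv_rhs => rw [hXY]
    rw [← Matrix.mul_assoc, hU1, Matrix.one_mul]
    rfl
  have hUu : Uᴴ * (Uᴴ)ᴴ = 1 := by rw [Matrix.conjTranspose_conjTranspose, hU1]
  rw [key, Matrix.mul_add, Matrix.trace_add, Complex.add_re]
  exact add_le_add (re_trace_mul_le X hUu) (re_trace_mul_le Y hUu)

lemma traceNorm_neg (X : Matrix n n ℂ) : traceNorm (-X) = traceNorm X := by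
  have := traceNorm_smul (-1 : ℂ) X
  simpa using this

lemma traceNorm_sub_le (X Y : Matrix n n ℂ) :
    traceNorm (X - Y) ≤ traceNorm X + traceNorm Y := by
  rw [sub_eq_add_neg]
  calc traceNorm (X + -Y) ≤ traceNorm X + traceNorm (-Y) := traceNorm_add_le _ _
  _ = traceNorm X + traceNorm Y := by rw [traceNorm_neg]

lemma traceNorm_conjTranspose_le (X : Matrix n n ℂ) : traceNorm Xᴴ ≤ traceNorm X := by
  obtain ⟨U, hU1, hU2, hXU⟩ := exists_polar Xᴴ
  have key : traceNorm Xᴴ = ((Uᴴ * Xᴴ).trace).re := by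
    conv_rhs => rw [hXU]
    rw [← Matrix.mul_assoc, hU1, Matrix.one_mul]
    rfl
  rw [key]
  have h1 : Uᴴ * Xᴴ = (X * U)ᴴ := by rw [Matrix.conjTranspose_mul]
  rw [h1, Matrix.trace_conjTranspose]
  have h2 : ((star (X * U).trace : ℂ)).re = ((X * U).trace).re := Complex.conj_re _
  rw [h2, Matrix.trace_mul_comm]
  exact re_trace_mul_le X hU2

lemma traceNorm_conjTranspose (X : Matrix n n ℂ) : traceNorm Xᴴ = traceNorm X := by
  refine le_antisymm (traceNorm_conjTranspose_le X) ?_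
  have := traceNorm_conjTranspose_le Xᴴ
  rwa [Matrix.conjTranspose_conjTranspose] at this

lemma traceNorm_sum_le {ι : Type*} (s : Finset ι) (f : ι → Matrix n n ℂ) :
    traceNorm (∑ i ∈ s, f i) ≤ ∑ i ∈ s, traceNorm (f i) := by
  classical
  induction s using Finset.induction_on with
  | empty => simp [traceNorm_zero]
  | insert _ _ hx ih =>
    rw [Finset.sum_insert hx, Finset.sum_insert hx]
    exact le_trans (traceNorm_add_le _ _) (by linarith)

lemma herm_decomp {H : Matrix n n ℂ} (hH : H.IsHermitian) :
    ∃ P N : Matrix n n ℂ, P.PosSemidef ∧ N.PosSemidef ∧ H = P - N ∧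
      (P.trace).re + (N.trace).re = traceNorm H := by
  classical
  set Q : Matrix n n ℂ := (hH.eigenvectorUnitary : Matrix n n ℂ) with hQdef
  have hQ1 : Qᴴ * Q = 1 := by
    rw [hQdef, ← Matrix.star_eq_conjTranspose]
    exact Matrix.mem_unitaryGroup_iff'.mp hH.eigenvectorUnitary.2
  have hQ2 : Q * Qᴴ = 1 := by
    rw [hQdef, ← Matrix.star_eq_conjTranspose]
    exact Matrix.mem_unitaryGroup_iff.mp hH.eigenvectorUnitary.2
  set d : n → ℝ := hH.eigenvalues with hddef
  have hspec : H = Q * Matrix.diagonal (fun i => (d i : ℂ)) * Qᴴ := by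
    conv_lhs => rw [hH.spectral_theorem]
    rw [← Matrix.star_eq_conjTranspose]
    rfl
  have htrace : ∀ f : n → ℝ, ((Q * Matrix.diagonal (fun i => (f i : ℂ)) * Qᴴ).trace).re
      = ∑ i, f i := by
    intro f
    rw [Matrix.trace_mul_cycle, hQ1, Matrix.one_mul, Matrix.trace_diagonal]
    rw [show (∑ i, ((f i : ℂ))) = ((∑ i, f i : ℝ) : ℂ) by push_cast; rfl, Complex.ofReal_re]
  have hpsd : ∀ f : n → ℝ, (∀ i, 0 ≤ f i) →
      (Q * Matrix.diagonal (fun i => (f i : ℂ)) * Qᴴ).PosSemidef := by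
    intro f hf
    refine Matrix.PosSemidef.mul_mul_conjTranspose_same ?_ Q
    refine Matrix.PosSemidef.diagonal ?_
    intro i
    simpa using Complex.zero_le_real.mpr (hf i)
  refine ⟨Q * Matrix.diagonal (fun i => ((max (d i) 0 : ℝ) : ℂ)) * Qᴴ,
    Q * Matrix.diagonal (fun i => ((max (-(d i)) 0 : ℝ) : ℂ)) * Qᴴ,
    hpsd _ (fun i => le_max_right _ _), hpsd _ (fun i => le_max_right _ _), ?_, ?_⟩
  · have hfun : (Matrix.diagonal fun i => ((max (d i) 0 : ℝ) : ℂ)) -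
        (Matrix.diagonal fun i => ((max (-(d i)) 0 : ℝ) : ℂ))
        = Matrix.diagonal fun i => ((d i : ℝ) : ℂ) := by
      have hfn : (fun i => ((max (d i) 0 : ℝ) : ℂ) - ((max (-(d i)) 0 : ℝ) : ℂ))
          = fun i => ((d i : ℝ) : ℂ) := funext fun i => by
        rw [← Complex.ofReal_sub, max_zero_sub_max_neg_zero_eq_self]
      rw [Matrix.diagonal_sub, hfn]
    rw [hspec, ← Matrix.sub_mul, ← Matrix.mul_sub, hfun]
  · have hmul : ∀ f g : n → ℝ,
        (Q * Matrix.diagonal (fun i => ((f i : ℝ) : ℂ)) * Qᴴ) *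
          (Q * Matrix.diagonal (fun i => ((g i : ℝ) : ℂ)) * Qᴴ)
        = Q * Matrix.diagonal (fun i => ((f i * g i : ℝ) : ℂ)) * Qᴴ := by
      intro f g
      calc (Q * Matrix.diagonal (fun i => ((f i : ℝ) : ℂ)) * Qᴴ) *
            (Q * Matrix.diagonal (fun i => ((g i : ℝ) : ℂ)) * Qᴴ)
          = Q * (Matrix.diagonal (fun i => ((f i : ℝ) : ℂ)) * (Qᴴ * (Q *
              (Matrix.diagonal (fun i => ((g i : ℝ) : ℂ)) * Qᴴ)))) := by
            simp only [Matrix.mul_assoc]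
      _ = Q * (Matrix.diagonal (fun i => ((f i : ℝ) : ℂ)) *
              (Matrix.diagonal (fun i => ((g i : ℝ) : ℂ)) * Qᴴ)) := by
            rw [← Matrix.mul_assoc Qᴴ Q, hQ1, Matrix.one_mul]
      _ = Q * ((Matrix.diagonal (fun i => ((f i : ℝ) : ℂ)) *
              Matrix.diagonal (fun i => ((g i : ℝ) : ℂ))) * Qᴴ) := by
            rw [Matrix.mul_assoc]
      _ = Q * Matrix.diagonal (fun i => ((f i * g i : ℝ) : ℂ)) * Qᴴ := by
            rw [Matrix.diagonal_mul_diagonal, ← Matrix.mul_assoc]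
            congr 2
            funext i
            push_cast
            rfl
    have hA : (Q * Matrix.diagonal (fun i => ((|d i| : ℝ) : ℂ)) * Qᴴ).PosSemidef :=
      hpsd _ (fun i => abs_nonneg _)
    have habs2 : (fun i => ((|d i| * |d i| : ℝ) : ℂ)) = fun i => ((d i * d i : ℝ) : ℂ) := by
      funext i
      rw [abs_mul_abs_self]
    have hsq : (Q * Matrix.diagonal (fun i => ((|d i| : ℝ) : ℂ)) * Qᴴ) ^ 2 = Hᴴ * H := by
      rw [pow_two, hmul, hH.eq, hspec, hmul, habs2]
    have htn : traceNorm H = ((Q * Matrix.diagonal (fun i => ((|d i| : ℝ) : ℂ)) * Qᴴ).trace).re := by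
      rw [show traceNorm H =
        ((Matrix.posSemidef_conjTranspose_mul_self H).sqrt.trace).re from rfl,
        ← hA.eq_sqrt_of_sq_eq (Matrix.posSemidef_conjTranspose_mul_self H) hsq]
    rw [htn, htrace, htrace, htrace, ← Finset.sum_add_distrib]
    refine Finset.sum_congr rfl fun i _ => ?_
    exact max_zero_add_max_neg_zero_eq_abs_self (d i)


lemma density_entry_norm_le {ρ : Matrix n n ℂ} (hρ : IsDensityMatrix ρ) (i j : n) :
    ‖ρ i j‖ ≤ 1 := by
  obtain ⟨hpsd, htr⟩ := hρ
  set R := hpsd.sqrt with hRdef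
  have hRR : R * R = ρ := hpsd.sqrt_mul_self
  have hRH : Rᴴ = R := hpsd.posSemidef_sqrt.1
  set x : n → (EuclideanSpace ℂ n) := fun i => WithLp.toLp 2 (fun k => R k i) with hxdef
  have hent : ∀ i j, ρ i j = (inner ℂ (x i) (x j) : ℂ) := by
    intro i j
    rw [PiLp.inner_apply]
    simp only [RCLike.inner_apply, hxdef, PiLp.toLp_apply]
    rw [← hRR, Matrix.mul_apply]
    refine Finset.sum_congr rfl fun k _ => ?_
    have hconj : R i k = (starRingEnd ℂ) (R k i) := by
      conv_lhs => rw [← hRH]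
      rfl
    rw [hconj, mul_comm]
  have hdiag : ∀ k, (ρ k k).re = ‖x k‖ ^ 2 := by
    intro k
    rw [hent k k]
    exact inner_self_eq_norm_sq (𝕜 := ℂ) (x k)
  have hsum : ∑ k, ‖x k‖ ^ 2 = 1 := by
    have h1 : (ρ.trace).re = 1 := by rw [htr]; simp
    rw [Matrix.trace, Complex.re_sum] at h1
    simp only [Matrix.diag_apply] at h1
    rw [← h1]
    exact Finset.sum_congr rfl fun k _ => (hdiag k).symm
  have hxk : ∀ k, ‖x k‖ ≤ 1 := by
    intro k
    have hle : ‖x k‖ ^ 2 ≤ 1 := by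
      rw [← hsum]
      exact Finset.single_le_sum (fun l _ => sq_nonneg ‖x l‖) (Finset.mem_univ k)
    nlinarith [norm_nonneg (x k)]
  rw [hent i j]
  calc ‖(inner ℂ (x i) (x j) : ℂ)‖ ≤ ‖x i‖ * ‖x j‖ := norm_inner_le_norm _ _
  _ ≤ 1 * 1 := by
      refine mul_le_mul (hxk i) (hxk j) (norm_nonneg _) ?_
      norm_num
  _ = 1 := by norm_num

end TNAux

/-- **Trace-norm bound for linear maps via their action on states.**
For every linear map `M` on matrices and every matrix `O`,
`‖M(O)‖₁ ≤ 2·‖O‖₁·sup { ‖M(ρ)‖₁ : ρ a density matrix }`. -/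
theorem traceNorm_map_le_two_mul_sup_on_states {dA dB : ℕ}
    (M : Matrix (Fin dA) (Fin dA) ℂ →ₗ[ℂ] Matrix (Fin dB) (Fin dB) ℂ)
    (O : Matrix (Fin dA) (Fin dA) ℂ) :
    traceNorm (M O) ≤ 2 * traceNorm O *
      sSup {x : ℝ | ∃ ρ : Matrix (Fin dA) (Fin dA) ℂ,
        IsDensityMatrix ρ ∧ x = traceNorm (M ρ)} := by
  classical
  set T : Set ℝ := {x : ℝ | ∃ ρ : Matrix (Fin dA) (Fin dA) ℂ,
    IsDensityMatrix ρ ∧ x = traceNorm (M ρ)} with hT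
  have hBdd : BddAbove T := by
    refine ⟨∑ p : Fin dA × Fin dA, traceNorm (M (Matrix.single p.1 p.2 1)), ?_⟩
    rintro x ⟨ρ, hρ, rfl⟩
    have hrep : ρ = ∑ p : Fin dA × Fin dA, ρ p.1 p.2 • Matrix.single p.1 p.2 1 := by
      conv_lhs => rw [Matrix.matrix_eq_sum_single ρ]
      conv_rhs => rw [Fintype.sum_prod_type]
      refine Finset.sum_congr rfl fun i _ => Finset.sum_congr rfl fun j _ => ?_
      rw [Matrix.smul_single, smul_eq_mul, mul_one]
    calc traceNorm (M ρ)
        = traceNorm (∑ p : Fin dA × Fin dA, ρ p.1 p.2 • M (Matrix.single p.1 p.2 1)) := by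
          conv_lhs => rw [hrep]
          rw [map_sum]
          simp_rw [LinearMap.map_smul]
    _ ≤ ∑ p : Fin dA × Fin dA, traceNorm (ρ p.1 p.2 • M (Matrix.single p.1 p.2 1)) :=
          TNAux.traceNorm_sum_le _ _
    _ ≤ ∑ p : Fin dA × Fin dA, traceNorm (M (Matrix.single p.1 p.2 1)) := by
          refine Finset.sum_le_sum fun p _ => ?_
          rw [TNAux.traceNorm_smul]
          calc ‖ρ p.1 p.2‖ * traceNorm (M (Matrix.single p.1 p.2 1))
              ≤ 1 * traceNorm (M (Matrix.single p.1 p.2 1)) :=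
                mul_le_mul_of_nonneg_right (TNAux.density_entry_norm_le hρ _ _)
                  (TNAux.traceNorm_nonneg _)
          _ = _ := one_mul _
  rcases Nat.eq_zero_or_pos dA with hdA | hdA
  · subst hdA
    have hO : O = 0 := by
      ext i j
      exact i.elim0
    rw [hO, map_zero, TNAux.traceNorm_zero, TNAux.traceNorm_zero]
    simp
  · set ρ₀ : Matrix (Fin dA) (Fin dA) ℂ := (((dA : ℝ)⁻¹ : ℝ) : ℂ) • 1 with hρ₀def
    have hdAne : ((dA : ℝ)) ≠ 0 := by positivity
    have hρ₀ : IsDensityMatrix ρ₀ := by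
      constructor
      · exact TNAux.posSemidef_ofReal_smul (by positivity) Matrix.PosSemidef.one
      · rw [hρ₀def, Matrix.trace_smul, Matrix.trace_one, smul_eq_mul, Fintype.card_fin]
        rw [show ((dA : ℕ) : ℂ) = (((dA : ℝ)) : ℂ) by push_cast; rfl]
        rw [← Complex.ofReal_mul, inv_mul_cancel₀ hdAne, Complex.ofReal_one]
    have hS0 : 0 ≤ sSup T :=
      le_csSup_of_le hBdd ⟨ρ₀, hρ₀, rfl⟩ (TNAux.traceNorm_nonneg _)
    have key : ∀ ρ : Matrix (Fin dA) (Fin dA) ℂ, ρ.PosSemidef →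
        traceNorm (M ρ) ≤ ρ.trace.re * sSup T := by
      intro ρ hρ
      by_cases h0 : ρ.trace.re = 0
      · rw [TNAux.psd_eq_zero_of_trace_re hρ h0, map_zero, TNAux.traceNorm_zero]
        simp
      · have ht : 0 < ρ.trace.re :=
          lt_of_le_of_ne (TNAux.psd_trace_re_nonneg hρ) (Ne.symm h0)
        have htrace0 : ρ.trace = ((ρ.trace.re : ℝ) : ℂ) := by
          conv_rhs => rw [TNAux.trace_eq_sum_eigenvalues hρ.1, Complex.ofReal_re]
          exact TNAux.trace_eq_sum_eigenvalues hρ.1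
        obtain ⟨t, ht0, htrace⟩ : ∃ t : ℝ, 0 < t ∧ ρ.trace = ((t : ℝ) : ℂ) :=
          ⟨ρ.trace.re, ht, htrace0⟩
        rw [htrace, Complex.ofReal_re]
        set ρ' := ((t⁻¹ : ℝ) : ℂ) • ρ with hρ'def
        have hρ'd : IsDensityMatrix ρ' := by
          constructor
          · exact TNAux.posSemidef_ofReal_smul (by positivity) hρ
          · rw [hρ'def, Matrix.trace_smul, htrace, smul_eq_mul, ← Complex.ofReal_mul,
              inv_mul_cancel₀ (ne_of_gt ht0), Complex.ofReal_one]
        have hst : ρ = ((t : ℝ) : ℂ) • ρ' := by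
          rw [hρ'def, smul_smul, ← Complex.ofReal_mul, mul_inv_cancel₀ (ne_of_gt ht0),
            Complex.ofReal_one, one_smul]
        calc traceNorm (M ρ) = traceNorm (((t : ℝ) : ℂ) • M ρ') := by
              conv_lhs => rw [hst]
              rw [LinearMap.map_smul]
        _ = ‖((t : ℝ) : ℂ)‖ * traceNorm (M ρ') := TNAux.traceNorm_smul _ _
        _ = t * traceNorm (M ρ') := by
              rw [Complex.norm_real, Real.norm_eq_abs, abs_of_pos ht0]
        _ ≤ t * sSup T :=
              mul_le_mul_of_nonneg_left (le_csSup hBdd ⟨ρ', hρ'd, rfl⟩) (le_of_lt ht0)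
    have hermKey : ∀ H : Matrix (Fin dA) (Fin dA) ℂ, H.IsHermitian →
        traceNorm (M H) ≤ traceNorm H * sSup T := by
      intro H hH
      obtain ⟨P, N, hP, hN, hPN, htr⟩ := TNAux.herm_decomp hH
      calc traceNorm (M H) = traceNorm (M P - M N) := by rw [hPN, map_sub]
      _ ≤ traceNorm (M P) + traceNorm (M N) := TNAux.traceNorm_sub_le _ _
      _ ≤ P.trace.re * sSup T + N.trace.re * sSup T := add_le_add (key P hP) (key N hN)
      _ = (P.trace.re + N.trace.re) * sSup T := (add_mul _ _ _).symm
      _ = traceNorm H * sSup T := by rw [htr]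
    set H₁ : Matrix (Fin dA) (Fin dA) ℂ := (2⁻¹ : ℂ) • (O + Oᴴ) with hH₁def
    set H₂ : Matrix (Fin dA) (Fin dA) ℂ := (-(2⁻¹) * Complex.I) • (O - Oᴴ) with hH₂def
    have herm1 : H₁.IsHermitian := by
      show H₁ᴴ = H₁
      rw [hH₁def, Matrix.conjTranspose_smul, Matrix.conjTranspose_add,
        Matrix.conjTranspose_conjTranspose, add_comm Oᴴ O]
      congr 1
      simp
    have herm2 : H₂.IsHermitian := by
      show H₂ᴴ = H₂
      rw [hH₂def, Matrix.conjTranspose_smul, Matrix.conjTranspose_sub,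
        Matrix.conjTranspose_conjTranspose,
        show Oᴴ - O = -(O - Oᴴ) from (neg_sub _ _).symm, smul_neg, ← neg_smul]
      congr 1
      simp [Complex.star_def, Complex.conj_I]
    have hO : O = H₁ + Complex.I • H₂ := by
      rw [hH₁def, hH₂def, smul_smul]
      rw [show Complex.I * (-(2⁻¹) * Complex.I) = (2⁻¹ : ℂ) by
        rw [show Complex.I * (-(2⁻¹ : ℂ) * Complex.I) = -(2⁻¹ : ℂ) * (Complex.I * Complex.I) by
          ring, Complex.I_mul_I]
        ring]
      module
    have hOT : traceNorm Oᴴ = traceNorm O := TNAux.traceNorm_conjTranspose O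
    have hn1 : traceNorm H₁ ≤ traceNorm O := by
      rw [hH₁def, TNAux.traceNorm_smul, show ‖(2⁻¹ : ℂ)‖ = 2⁻¹ by norm_num]
      have h2 := TNAux.traceNorm_add_le O Oᴴ
      rw [hOT] at h2
      linarith
    have hn2 : traceNorm H₂ ≤ traceNorm O := by
      rw [hH₂def, TNAux.traceNorm_smul, show ‖(-(2⁻¹) * Complex.I : ℂ)‖ = 2⁻¹ by
        rw [norm_mul, norm_neg, Complex.norm_I, mul_one]
        norm_num]
      have h2 := TNAux.traceNorm_sub_le O Oᴴ
      rw [hOT] at h2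
      linarith
    calc traceNorm (M O) = traceNorm (M H₁ + Complex.I • M H₂) := by
          conv_lhs => rw [hO]
          rw [map_add, LinearMap.map_smul, LinearMap.map_smul]
    _ ≤ traceNorm (M H₁) + traceNorm (Complex.I • M H₂) := TNAux.traceNorm_add_le _ _
    _ = traceNorm (M H₁) + traceNorm (M H₂) := by
          rw [TNAux.traceNorm_smul, Complex.norm_I, one_mul]
    _ ≤ traceNorm H₁ * sSup T + traceNorm H₂ * sSup T :=
          add_le_add (hermKey _ herm1) (hermKey _ herm2)
    _ ≤ traceNorm O * sSup T + traceNorm O * sSup T :=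
          add_le_add (mul_le_mul_of_nonneg_right hn1 hS0)
            (mul_le_mul_of_nonneg_right hn2 hS0)
    _ = 2 * traceNorm O * sSup T := by ring
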